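/- Let I ⊆ ℝ be an interval and let φ : I → ℝ be strictly convex and continuously differentiable on I. Let x_K ∈ I and x_L ∈ I with x_K ≠ x_L. Then there exists a unique real number x_KL ∈ [[x_K,x_L]] such that φ(x_K) + φ'(x_K)·(x_KL − x_K) = φ(x_L) + φ'(x_L)·(x_KL − x_L). -/

import Mathlib

private lemma tangent_aux
    (I : Set ℝ) (φ φ' : ℝ → ℝ)
    (hdiff : ∀ x ∈ I, HasDerivWithinAt φ (φ' x) I x)
    (hconv : StrictConvexOn ℝ I φ)
    (a b : ℝ) (ha : a ∈ I) (hb : b ∈ I) (hab : a < b) :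
    ∃! x : ℝ, x ∈ Set.Icc a b ∧
      φ a + φ' a * (x - a) = φ b + φ' b * (x - b) := by
  have h1 : φ' a < slope φ a b :=
    hconv.lt_slope_of_hasDerivWithinAt ha hb hab (hdiff a ha)
  have h2 : slope φ a b < φ' b :=
    hconv.slope_lt_of_hasDerivWithinAt ha hb hab (hdiff b hb)
  rw [slope_def_field] at h1 h2
  have hba : (0:ℝ) < b - a := by linarith
  have h1' : φ' a * (b - a) < φ b - φ a := (lt_div_iff₀ hba).mp h1
  have h2' : φ b - φ a < φ' b * (b - a) := by
    nlinarith [(div_lt_iff₀ hba).mp h2]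
  have hd : φ' a - φ' b < 0 := by nlinarith
  set x₀ : ℝ := (φ b - φ a - φ' b * b + φ' a * a) / (φ' a - φ' b) with hx₀
  have hdne : φ' a - φ' b ≠ 0 := ne_of_lt hd
  have hsolve : (φ' a - φ' b) * x₀ = φ b - φ a - φ' b * b + φ' a * a := by
    rw [hx₀]; field_simp
  refine ⟨x₀, ⟨⟨?_, ?_⟩, ?_⟩, ?_⟩
  · -- a ≤ x₀
    nlinarith [hsolve]
  · -- x₀ ≤ b
    nlinarith [hsolve]
  · nlinarith [hsolve]
  · rintro y ⟨-, hy⟩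
    have : (φ' a - φ' b) * y = φ b - φ a - φ' b * b + φ' a * a := by ring_nf; ring_nf at hy; linarith
    have h := this.trans hsolve.symm
    have := mul_left_cancel₀ hdne h
    exact this

/-- Tangent-intersection point (Lemma 2.6): for a strictly convex continuously
differentiable function `φ` on an interval `I` and `x_K ≠ x_L` in `I`, there is a
unique point `x_KL ∈ [[x_K, x_L]]` where the tangent lines at `x_K` and `x_L`
take the same value. Here `φ'` denotes the (one-sided, within `I`) derivative of `φ`. -/
theorem tangent_intersection_exists_unique
    (I : Set ℝ) (hI : Convex ℝ I) (φ φ' : ℝ → ℝ)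
    (hdiff : ∀ x ∈ I, HasDerivWithinAt φ (φ' x) I x)
    (hcont : ContinuousOn φ' I)
    (hconv : StrictConvexOn ℝ I φ)
    (xK xL : ℝ) (hxK : xK ∈ I) (hxL : xL ∈ I) (hne : xK ≠ xL) :
    ∃! x : ℝ, x ∈ Set.uIcc xK xL ∧
      φ xK + φ' xK * (x - xK) = φ xL + φ' xL * (x - xL) := by
  rcases lt_or_gt_of_ne hne with h | h
  · have := tangent_aux I φ φ' hdiff hconv xK xL hxK hxL h
    simpa [Set.uIcc_of_le h.le] using this
  · have := tangent_aux I φ φ' hdiff hconv xL xK hxL hxK h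
    rw [Set.uIcc_comm]
    refine Exists.imp ?_ this
    rintro x ⟨⟨hx1, hx2⟩, hx3⟩
    rw [Set.uIcc_of_le h.le]
    exact ⟨⟨hx1, hx2.symm⟩, fun y hy => hx3 y ⟨hy.1, hy.2.symm⟩⟩
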